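/- Let α = (9−√5)/38. For all real numbers μ, a01, b01, c010, c011, c001, c101, c0101, c0110: if the matrix M2(μ, a01, b01, c010, c011, c001, c101, c0101, c0110) is positive semidefinite, then μ ≤ 5√5 − 11. -/

import Mathlib

noncomputable def α : ℝ := (9 - Real.sqrt 5) / 38

noncomputable def M2 (μ a01 b01 c010 c011 c001 c101 c0101 c0110 : ℝ) :
    Matrix (Fin 9) (Fin 9) ℝ :=
  !![1, μ/2+α*(1-μ), μ/2+2*α*(1-μ), μ/2+α*(1-μ), μ/2+2*α*(1-μ), μ/2, μ/2+α*(1-μ), μ/2+α*(1-μ), 0;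
     μ/2+α*(1-μ), μ/2+α*(1-μ), a01, μ/2, μ/2+α*(1-μ), μ/2, μ/2+α*(1-μ), c010, c011;
     μ/2+2*α*(1-μ), a01, μ/2+2*α*(1-μ), μ/2+α*(1-μ), 0, c010, c011, μ/2+α*(1-μ), 0;
     μ/2+α*(1-μ), μ/2, μ/2+α*(1-μ), μ/2+α*(1-μ), b01, μ/2, c001, μ/2+α*(1-μ), c101;
     μ/2+2*α*(1-μ), μ/2+α*(1-μ), 0, b01, μ/2+2*α*(1-μ), c001, μ/2+α*(1-μ), c101, 0;
     μ/2, μ/2, c010, μ/2, c001, μ/2, c001, c010, c0101;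
     μ/2+α*(1-μ), μ/2+α*(1-μ), c011, c001, μ/2+α*(1-μ), c001, μ/2+α*(1-μ), c0110, c011;
     μ/2+α*(1-μ), c010, μ/2+α*(1-μ), μ/2+α*(1-μ), c101, c010, c0110, μ/2+α*(1-μ), c101;
     0, c011, 0, c101, 0, c0101, c011, c101, 0]


set_option maxHeartbeats 2000000 in
theorem stmt6 (μ a01 b01 c010 c011 c001 c101 c0101 c0110 : ℝ)
    (h : (M2 μ a01 b01 c010 c011 c001 c101 c0101 c0110).PosSemidef) :
    μ ≤ 5 * Real.sqrt 5 - 11 := by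
  by_contra hcon
  push_neg at hcon
  have hr5 : Real.sqrt 5 ^ 2 = 5 := Real.sq_sqrt (by norm_num)
  have hr0 : (0:ℝ) ≤ Real.sqrt 5 := Real.sqrt_nonneg 5
  have hr2 : (2.2:ℝ) < Real.sqrt 5 := by nlinarith
  have hr3 : Real.sqrt 5 < 3 := by nlinarith
  have hmu0 : 0 < μ := by nlinarith
  have hc011 : c011 = 0 := by
    have hq := h.dotProduct_mulVec_nonneg ![0, c011, 0, 0, 0, 0, 0, 0, -(μ/2 + α*(1-μ) + 1)/2]
    simp [M2, α, Matrix.mulVec, dotProduct, Fin.sum_univ_succ] at hq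
    nlinarith [hq, sq_nonneg c011]
  have hc101 : c101 = 0 := by
    have hq := h.dotProduct_mulVec_nonneg ![0, 0, 0, c101, 0, 0, 0, 0, -(μ/2 + α*(1-μ) + 1)/2]
    simp [M2, α, Matrix.mulVec, dotProduct, Fin.sum_univ_succ] at hq
    nlinarith [hq, sq_nonneg c101]
  subst hc011 hc101
  have hB : (0:ℝ) < (μ/2 + 2*((9 - Real.sqrt 5)/38)*(1-μ)) := by nlinarith
  have h1 : (0:ℝ) < μ - (5*Real.sqrt 5 - 11) := by linarith
  have h2 : (0:ℝ) < (104 + 37*Real.sqrt 5)*μ + 58*Real.sqrt 5 + 124 := by nlinarith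
  have hD : (0:ℝ) < ((μ/2 + (9 - Real.sqrt 5)/38*(1-μ))^2 - ((μ/2 + (9 - Real.sqrt 5)/38*(1-μ)) - (μ/2))*(μ/2 + 2*((9 - Real.sqrt 5)/38)*(1-μ))) := by nlinarith [mul_pos h1 h2]
  have hu := h.dotProduct_mulVec_nonneg ![0, 2*(μ/2 + (9 - Real.sqrt 5)/38*(1-μ))*(μ/2 + 2*((9 - Real.sqrt 5)/38)*(1-μ)), -((μ/2 + (9 - Real.sqrt 5)/38*(1-μ))^2 - ((μ/2 + (9 - Real.sqrt 5)/38*(1-μ)) - (μ/2))*(μ/2 + 2*((9 - Real.sqrt 5)/38)*(1-μ))), 2*(μ/2 + (9 - Real.sqrt 5)/38*(1-μ))*(μ/2 + 2*((9 - Real.sqrt 5)/38)*(1-μ)), -((μ/2 + (9 - Real.sqrt 5)/38*(1-μ))^2 - ((μ/2 + (9 - Real.sqrt 5)/38*(1-μ)) - (μ/2))*(μ/2 + 2*((9 - Real.sqrt 5)/38)*(1-μ))), 0, -(2*(μ/2 + (9 - Real.sqrt 5)/38*(1-μ))*(μ/2 + 2*((9 - Real.sqrt 5)/38)*(1-μ))),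 -(2*(μ/2 + (9 - Real.sqrt 5)/38*(1-μ))*(μ/2 + 2*((9 - Real.sqrt 5)/38)*(1-μ))), 0]
  have hy := h.dotProduct_mulVec_nonneg ![0, 1, 0, -1, 0, 0, -1, 1, 0]
  have hz := h.dotProduct_mulVec_nonneg ![0, (μ/2 + 2*((9 - Real.sqrt 5)/38)*(1-μ)), (μ/2 + (9 - Real.sqrt 5)/38*(1-μ)), -(μ/2 + 2*((9 - Real.sqrt 5)/38)*(1-μ)), -(μ/2 + (9 - Real.sqrt 5)/38*(1-μ)), 0, 0, 0, 0]
  simp [M2, α, Matrix.mulVec, dotProduct, Fin.sum_univ_succ] at hu hy hz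
  have t1 := mul_nonneg (sq_nonneg (2*(μ/2 + (9 - Real.sqrt 5)/38*(1-μ))*(μ/2 + 2*((9 - Real.sqrt 5)/38)*(1-μ)))) hy
  have t2 := mul_nonneg (le_of_lt (by linarith : (0:ℝ) < 2*((μ/2 + (9 - Real.sqrt 5)/38*(1-μ))^2 - ((μ/2 + (9 - Real.sqrt 5)/38*(1-μ)) - (μ/2))*(μ/2 + 2*((9 - Real.sqrt 5)/38)*(1-μ))))) hz
  have hposBD : (0:ℝ) < 2*(μ/2 + 2*((9 - Real.sqrt 5)/38)*(1-μ))*((μ/2 + (9 - Real.sqrt 5)/38*(1-μ))^2 - ((μ/2 + (9 - Real.sqrt 5)/38*(1-μ)) - (μ/2))*(μ/2 + 2*((9 - Real.sqrt 5)/38)*(1-μ)))^2 := mul_pos (by linarith) (pow_pos hD 2)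
  linarith [hu, t1, t2, hposBD]
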